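/- Let X be an obtuse random variable in C^N, with X^0 denoting the constant random variable 1. Then there exists a unique 3-tensor S on C^{N+1} such that X^i X^j = ∑_{k=0}^N S^{ij}_k X^k almost surely for all i, j = 0, ..., N, and it is given by S^{ij}_k = E[X^i X^j conj(X^k)]. -/

import Mathlib

open scoped BigOperators InnerProductSpace ComplexConjugate

/-- The extended coordinate vector of an obtuse random variable at the sample point
`ω`: `X^0 = 1` together with the coordinates of the value `v ω ∈ ℂ^N`. -/
def hatv {N : ℕ} (v : Fin (N + 1) → EuclideanSpace ℂ (Fin N))
    (ω : Fin (N + 1)) : Fin (N + 1) → ℂ :=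
  Fin.cons 1 (fun k => v ω k)

/-- The 3-tensor of an obtuse random variable: `S^{ij}_k = E[X^i X^j conj(X^k)]`. -/
noncomputable def tensorS {N : ℕ} (p : Fin (N + 1) → ℝ)
    (v : Fin (N + 1) → EuclideanSpace ℂ (Fin N)) (i j k : Fin (N + 1)) : ℂ :=
  ∑ ω, (p ω : ℂ) * (hatv v ω i * hatv v ω j * (starRingEnd ℂ) (hatv v ω k))

/-- **Existence and uniqueness of the associated 3-tensor.**
For an obtuse random variable `X` in `ℂ^N` (with `X^0 = 1`), there is a unique
3-tensor `S` on `ℂ^{N+1}` with `X^i X^j = ∑ k, S^{ij}_k X^k` almost surely, and it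
is given by `S^{ij}_k = E[X^i X^j conj(X^k)]`. -/
theorem obtuse_tensor_exists_unique (N : ℕ)
    (v : Fin (N + 1) → EuclideanSpace ℂ (Fin N)) (hv : Function.Injective v)
    (p : Fin (N + 1) → ℝ) (hp : ∀ i, 0 < p i) (hp1 : ∑ i, p i = 1)
    (hc : ∀ k, ∑ i, (p i : ℂ) * v i k = 0)
    (hn : ∀ k l, ∑ i, (p i : ℂ) * ((starRingEnd ℂ) (v i k) * v i l)
        = if k = l then 1 else 0) :
    (∀ i j ω, hatv v ω i * hatv v ω j = ∑ k, tensorS p v i j k * hatv v ω k) ∧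
      (∀ S : Fin (N + 1) → Fin (N + 1) → Fin (N + 1) → ℂ,
        (∀ i j ω, hatv v ω i * hatv v ω j = ∑ k, S i j k * hatv v ω k) →
          S = tensorS p v) := by
  classical
  set A : Matrix (Fin (N + 1)) (Fin (N + 1)) ℂ := fun ω k => hatv v ω k with hAdef
  set B : Matrix (Fin (N + 1)) (Fin (N + 1)) ℂ :=
    fun k ω => (starRingEnd ℂ) (hatv v ω k) * (p ω : ℂ) with hBdef
  -- orthonormality of columns : B * A = 1
  have hBA : B * A = 1 := by
    ext k l
    have hL : (B * A) k l = ∑ ω, (starRingEnd ℂ) (hatv v ω k) * (p ω : ℂ) * hatv v ω l :=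
      rfl
    rw [hL, Matrix.one_apply]
    induction k using Fin.cases with
    | zero =>
      induction l using Fin.cases with
      | zero =>
        rw [if_pos rfl]
        simp only [hatv, Fin.cons_zero, map_one, one_mul, mul_one]
        rw [← Complex.ofReal_sum, hp1, Complex.ofReal_one]
      | succ l' =>
        rw [if_neg (Fin.succ_ne_zero l').symm, ← hc l']
        exact Finset.sum_congr rfl fun ω _ => by
          simp only [hatv, Fin.cons_zero, Fin.cons_succ, map_one]; ring
    | succ k' =>
      induction l using Fin.cases with
      | zero =>
        have h := congrArg (starRingEnd ℂ) (hc k')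
        rw [map_sum, map_zero] at h
        rw [if_neg (Fin.succ_ne_zero k'), ← h]
        exact Finset.sum_congr rfl fun ω _ => by
          simp only [hatv, Fin.cons_zero, Fin.cons_succ, map_mul, Complex.conj_ofReal,
            mul_one]; ring
      | succ l' =>
        rw [show (if Fin.succ k' = Fin.succ l' then (1 : ℂ) else 0)
            = if k' = l' then 1 else 0 by simp [Fin.succ_inj], ← hn k' l']
        exact Finset.sum_congr rfl fun ω _ => by
          simp only [hatv, Fin.cons_succ]; ring
  have hAB : A * B = 1 := mul_eq_one_comm.mp hBA
  have key : ∀ ω ω', ∑ k, hatv v ω k * ((starRingEnd ℂ) (hatv v ω' k) * (p ω' : ℂ))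
      = if ω = ω' then 1 else 0 := by
    intro ω ω'
    have h := congrFun (congrFun hAB ω) ω'
    rw [Matrix.mul_apply] at h
    simp only [Matrix.mul_apply, hAdef, hBdef, Matrix.one_apply] at h
    simpa [mul_assoc] using h
  have hex : ∀ i j ω, hatv v ω i * hatv v ω j = ∑ k, tensorS p v i j k * hatv v ω k := by
    intro i j ω
    have h1 : ∑ k, tensorS p v i j k * hatv v ω k
        = ∑ ω', (hatv v ω' i * hatv v ω' j) *
            ∑ k, hatv v ω k * ((starRingEnd ℂ) (hatv v ω' k) * (p ω' : ℂ)) := by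
      simp only [tensorS, Finset.sum_mul, Finset.mul_sum]
      rw [Finset.sum_comm]
      exact Finset.sum_congr rfl fun ω' _ => Finset.sum_congr rfl fun k _ => by ring
    rw [h1]
    simp [key]
  refine ⟨hex, fun S hS => ?_⟩
  funext i j k
  set c : Fin (N + 1) → ℂ := fun l => S i j l - tensorS p v i j l with hcdef
  have hAc : A.mulVec c = 0 := by
    funext ω
    have h1 := hS i j ω
    have h2 := hex i j ω
    simp only [Matrix.mulVec, dotProduct, hAdef, hcdef, Pi.zero_apply]
    have : ∑ l, hatv v ω l * (S i j l - tensorS p v i j l)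
        = (∑ l, S i j l * hatv v ω l) - ∑ l, tensorS p v i j l * hatv v ω l := by
      rw [← Finset.sum_sub_distrib]
      exact Finset.sum_congr rfl fun l _ => by ring
    rw [this, ← h1, ← h2, sub_self]
  have hc0 : c = 0 := by
    have h := congrArg (fun M => M.mulVec c) hBA
    simp only [← Matrix.mulVec_mulVec, hAc, Matrix.mulVec_zero, Matrix.one_mulVec] at h
    exact h.symm
  have := congrFun hc0 k
  simpa [hcdef, sub_eq_zero] using this
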